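/- Let r ≥ 1, let λ and γ be complex numbers, and let β be a nonzero complex number. Then the pair of (2r+2)×(2r) complex matrices (F_r ⊕ F_{r+1} ⊕ [1], (K_r ⊕ K_{r+1} ⊕ [λ]) + β·E_{1,2r} + γ·E_{r+1,2r}), where [1] and [λ] are 1×1 blocks, is equivalent to the pair (F_{r+1} ⊕ F_{r+1}, K_{r+1} ⊕ K_{r+1}). -/

import Mathlib

open Matrix

noncomputable section

/-- The `M × N` complex matrix obtained by placing the matrix `A` with its top-left corner
at (1-based) position `(ri+1, ci+1)` (i.e. with row offset `ri` and column offset `ci`),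
with all other entries zero.  Block-diagonal direct sums of (possibly rectangular) matrices
are expressed as sums of such placements along the diagonal. -/
def place {M N m n : ℕ} (ri ci : ℕ) (A : Matrix (Fin m) (Fin n) ℂ) :
    Matrix (Fin M) (Fin N) ℂ := fun i j =>
  if hi : ri ≤ (i : ℕ) ∧ (i : ℕ) < ri + m then
    if hj : ci ≤ (j : ℕ) ∧ (j : ℕ) < ci + n then
      A ⟨(i : ℕ) - ri, by omega⟩ ⟨(j : ℕ) - ci, by omega⟩
    else 0
  else 0

/-- The `r × (r-1)` matrix `F_r` with ones on the main diagonal and zeros elsewhere. -/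
def MatF (r : ℕ) : Matrix (Fin r) (Fin (r - 1)) ℂ :=
  fun i j => if (i : ℕ) = (j : ℕ) then 1 else 0

/-- The `r × (r-1)` matrix `K_r` with ones on the subdiagonal and zeros elsewhere. -/
def MatK (r : ℕ) : Matrix (Fin r) (Fin (r - 1)) ℂ :=
  fun i j => if (i : ℕ) = (j : ℕ) + 1 then 1 else 0

/-- The matrix unit `E_{a,b}` (1-based indices): entry `(a,b)` is `1`, all others `0`. -/
def Estd {M N : ℕ} (a b : ℕ) : Matrix (Fin M) (Fin N) ℂ :=
  fun i j => if (i : ℕ) + 1 = a ∧ (j : ℕ) + 1 = b then 1 else 0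

/-- Two pairs `(A₁, A₂)` and `(B₁, B₂)` of `m × n` complex matrices are equivalent if
`B₁ = R * A₁ * S` and `B₂ = R * A₂ * S` for some invertible `R`, `S`. -/
def PairEquiv {m n : ℕ} (A₁ A₂ B₁ B₂ : Matrix (Fin m) (Fin n) ℂ) : Prop :=
  ∃ (R : Matrix (Fin m) (Fin m) ℂ) (S : Matrix (Fin n) (Fin n) ℂ),
    IsUnit R ∧ IsUnit S ∧ B₁ = R * A₁ * S ∧ B₂ = R * A₂ * S

/- ## auxiliary matrices -/

def myG (r : ℕ) (lam γ β : ℂ) : Matrix (Fin (2*r+2)) (Fin (2*r+2)) ℂ := fun i k =>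
  (if (k:ℕ) ≤ r ∧ (i:ℕ) = 2*r+1 then lam^(k:ℕ) else 0)
  + (if (k:ℕ) ≤ r ∧ (i:ℕ) < r ∧ (i:ℕ) < (k:ℕ) then β * lam^((k:ℕ)-1-(i:ℕ)) else 0)
  + (if (k:ℕ) ≤ r ∧ r ≤ (i:ℕ) ∧ (i:ℕ) < 2*r ∧ (i:ℕ)-r < (k:ℕ) then γ * lam^((k:ℕ)-1-((i:ℕ)-r)) else 0)
  + (if r < (k:ℕ) ∧ (i:ℕ)+1 = (k:ℕ) then 1 else 0)

def myR (r : ℕ) (lam γ β : ℂ) : Matrix (Fin (2*r+2)) (Fin (2*r+2)) ℂ := fun i j =>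
  (if (j:ℕ) < r ∧ (i:ℕ) = (j:ℕ)+1 then β⁻¹ else 0)
  + (if (j:ℕ) < r ∧ (i:ℕ) = (j:ℕ) then -(lam*β⁻¹) else 0)
  + (if (j:ℕ) < r ∧ (i:ℕ) = r+1+(j:ℕ) then -(γ*β⁻¹) else 0)
  + (if r ≤ (j:ℕ) ∧ (j:ℕ) ≤ 2*r ∧ (i:ℕ) = (j:ℕ)+1 then 1 else 0)
  + (if 2*r < (j:ℕ) ∧ (i:ℕ) = 0 then 1 else 0)

def myS (r : ℕ) (lam γ β : ℂ) : Matrix (Fin (2*r)) (Fin (2*r)) ℂ := fun i j =>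
  (if (j:ℕ) < r ∧ (i:ℕ) = 2*r-1 then lam^(j:ℕ) else 0)
  + (if (j:ℕ) < r ∧ (i:ℕ)+1 < r ∧ (i:ℕ) < (j:ℕ) then β * lam^((j:ℕ)-1-(i:ℕ)) else 0)
  + (if (j:ℕ) < r ∧ r ≤ (i:ℕ)+1 ∧ (i:ℕ) < 2*r-1 ∧ (i:ℕ)+1-r < (j:ℕ) then γ * lam^((j:ℕ)-1-((i:ℕ)+1-r)) else 0)
  + (if r ≤ (j:ℕ) ∧ (i:ℕ)+1 = (j:ℕ) then 1 else 0)

def myT (r : ℕ) (lam γ β : ℂ) : Matrix (Fin (2*r)) (Fin (2*r)) ℂ := fun i j =>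
  (if (j:ℕ)+1 < r ∧ (i:ℕ) = (j:ℕ)+1 then β⁻¹ else 0)
  + (if (j:ℕ)+1 < r ∧ (i:ℕ) = (j:ℕ) then -(lam*β⁻¹) else 0)
  + (if (j:ℕ)+1 < r ∧ (i:ℕ) = r+(j:ℕ) then -(γ*β⁻¹) else 0)
  + (if r ≤ (j:ℕ)+1 ∧ (j:ℕ) < 2*r-1 ∧ (i:ℕ) = (j:ℕ)+1 then 1 else 0)
  + (if 2*r-1 ≤ (j:ℕ) ∧ (i:ℕ) = 0 then 1 else 0)

/- ## entry lemmas for myG -/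

section Gapp
variable {r : ℕ} (lam γ β : ℂ) (i k : Fin (2*r+2))

lemma myG_top (hk : (k:ℕ) ≤ r) (hi : (i:ℕ) = 2*r+1) :
    myG r lam γ β i k = lam^(k:ℕ) := by
  simp only [myG]; split_ifs <;> first | (exfalso; omega) | ring1

lemma myG_beta (hk : (k:ℕ) ≤ r) (hi : (i:ℕ) < r) :
    myG r lam γ β i k = if (i:ℕ) < (k:ℕ) then β * lam^((k:ℕ)-1-(i:ℕ)) else 0 := by
  simp only [myG]; split_ifs <;> first | (exfalso; omega) | ring1

lemma myG_gamma (hk : (k:ℕ) ≤ r) (h1 : r ≤ (i:ℕ)) (h2 : (i:ℕ) < 2*r) :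
    myG r lam γ β i k = if (i:ℕ)-r < (k:ℕ) then γ * lam^((k:ℕ)-1-((i:ℕ)-r)) else 0 := by
  simp only [myG]; split_ifs <;> first | (exfalso; omega) | ring1

lemma myG_mid (hk : (k:ℕ) ≤ r) (hi : (i:ℕ) = 2*r) :
    myG r lam γ β i k = 0 := by
  simp only [myG]; split_ifs <;> first | (exfalso; omega) | ring1

lemma myG_right (hk : r < (k:ℕ)) :
    myG r lam γ β i k = if (i:ℕ)+1 = (k:ℕ) then 1 else 0 := by
  simp only [myG]; split_ifs <;> first | (exfalso; omega) | ring1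

end Gapp

/- ## entry lemmas for myS -/

section Sapp
variable {r : ℕ} (lam γ β : ℂ) (i j : Fin (2*r))

lemma myS_top (hj : (j:ℕ) < r) (hi : (i:ℕ) = 2*r-1) :
    myS r lam γ β i j = lam^(j:ℕ) := by
  simp only [myS]; split_ifs <;> first | (exfalso; omega) | ring1

lemma myS_beta (hj : (j:ℕ) < r) (hi : (i:ℕ)+1 < r) :
    myS r lam γ β i j = if (i:ℕ) < (j:ℕ) then β * lam^((j:ℕ)-1-(i:ℕ)) else 0 := by
  simp only [myS]; split_ifs <;> first | (exfalso; omega) | ring1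

lemma myS_gamma (hj : (j:ℕ) < r) (h1 : r ≤ (i:ℕ)+1) (h2 : (i:ℕ) < 2*r-1) :
    myS r lam γ β i j = if (i:ℕ)+1-r < (j:ℕ) then γ * lam^((j:ℕ)-1-((i:ℕ)+1-r)) else 0 := by
  simp only [myS]; split_ifs <;> first | (exfalso; omega) | ring1

lemma myS_right (hj : r ≤ (j:ℕ)) :
    myS r lam γ β i j = if (i:ℕ)+1 = (j:ℕ) then 1 else 0 := by
  have := i.isLt
  simp only [myS]; split_ifs <;> first | (exfalso; omega) | ring1

end Sapp

/- ## column lemmas for myR, myT -/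

section RTcol
variable {r : ℕ} (lam γ β : ℂ)

lemma myR_col1 (j : Fin (2*r+2)) (hj : (j:ℕ) < r) (i : Fin (2*r+2)) :
    myR r lam γ β i j = (if (i:ℕ) = (j:ℕ)+1 then β⁻¹ else 0)
      + ((if (i:ℕ) = (j:ℕ) then -(lam*β⁻¹) else 0)
      + (if (i:ℕ) = r+1+(j:ℕ) then -(γ*β⁻¹) else 0)) := by
  simp only [myR]; split_ifs <;> first | (exfalso; omega) | ring1

lemma myR_col2 (j : Fin (2*r+2)) (h1 : r ≤ (j:ℕ)) (h2 : (j:ℕ) ≤ 2*r) (i : Fin (2*r+2)) :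
    myR r lam γ β i j = if (i:ℕ) = (j:ℕ)+1 then 1 else 0 := by
  simp only [myR]; split_ifs <;> first | (exfalso; omega) | ring1

lemma myR_col3 (j : Fin (2*r+2)) (h1 : 2*r < (j:ℕ)) (i : Fin (2*r+2)) :
    myR r lam γ β i j = if (i:ℕ) = 0 then 1 else 0 := by
  simp only [myR]; split_ifs <;> first | (exfalso; omega) | ring1

lemma myT_col1 (j : Fin (2*r)) (hj : (j:ℕ)+1 < r) (i : Fin (2*r)) :
    myT r lam γ β i j = (if (i:ℕ) = (j:ℕ)+1 then β⁻¹ else 0)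
      + ((if (i:ℕ) = (j:ℕ) then -(lam*β⁻¹) else 0)
      + (if (i:ℕ) = r+(j:ℕ) then -(γ*β⁻¹) else 0)) := by
  simp only [myT]; split_ifs <;> first | (exfalso; omega) | ring1

lemma myT_col2 (j : Fin (2*r)) (h1 : r ≤ (j:ℕ)+1) (h2 : (j:ℕ) < 2*r-1) (i : Fin (2*r)) :
    myT r lam γ β i j = if (i:ℕ) = (j:ℕ)+1 then 1 else 0 := by
  simp only [myT]; split_ifs <;> first | (exfalso; omega) | ring1

lemma myT_col3 (j : Fin (2*r)) (h1 : 2*r-1 ≤ (j:ℕ)) (hr : 1 ≤ r) (i : Fin (2*r)) :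
    myT r lam γ β i j = if (i:ℕ) = 0 then 1 else 0 := by
  have := j.isLt
  simp only [myT]; split_ifs <;> first | (exfalso; omega) | ring1

end RTcol

/- ## sum collapse lemmas -/

lemma sum_dr {n : ℕ} {f : Fin n → ℂ} {c : ℂ} (a : ℕ) (h : a < n) :
    (∑ k : Fin n, f k * (if (k : ℕ) = a then c else 0)) = f ⟨a, h⟩ * c := by
  rw [Finset.sum_eq_single (⟨a, h⟩ : Fin n)]
  · simp
  · intro b _ hb
    rw [if_neg (fun hba => hb (Fin.ext hba)), mul_zero]
  · intro h'; exact absurd (Finset.mem_univ _) h'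

lemma sum_dl {n : ℕ} {f : Fin n → ℂ} {c : ℂ} (a : ℕ) (h : a < n) :
    (∑ k : Fin n, (if (k : ℕ) = a then c else 0) * f k) = c * f ⟨a, h⟩ := by
  rw [Finset.sum_eq_single (⟨a, h⟩ : Fin n)]
  · simp
  · intro b _ hb
    rw [if_neg (fun hba => hb (Fin.ext hba)), zero_mul]
  · intro h'; exact absurd (Finset.mem_univ _) h'


/- ## eval lemmas for placed blocks -/

lemma placeF_apply {M N : ℕ} (ri ci m : ℕ) (i : Fin M) (j : Fin N) :
    place ri ci (MatF m) i j =
      if ri ≤ (i:ℕ) ∧ (i:ℕ) < ri + m ∧ ci ≤ (j:ℕ) ∧ (j:ℕ) < ci + (m-1)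
          ∧ (i:ℕ) - ri = (j:ℕ) - ci then 1 else 0 := by
  simp only [place, MatF]
  split_ifs <;> first | rfl | (exfalso; omega)

lemma placeK_apply {M N : ℕ} (ri ci m : ℕ) (i : Fin M) (j : Fin N) :
    place ri ci (MatK m) i j =
      if ri ≤ (i:ℕ) ∧ (i:ℕ) < ri + m ∧ ci ≤ (j:ℕ) ∧ (j:ℕ) < ci + (m-1)
          ∧ (i:ℕ) - ri = ((j:ℕ) - ci) + 1 then 1 else 0 := by
  simp only [place, MatK]
  split_ifs <;> first | rfl | (exfalso; omega)

lemma placeOne_apply {M N : ℕ} (ri ci : ℕ) (a : ℂ) (i : Fin M) (j : Fin N) :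
    place ri ci !![a] i j = if (i:ℕ) = ri ∧ (j:ℕ) = ci then a else 0 := by
  simp only [place]
  split_ifs <;> first | (exfalso; omega) | simp [Matrix.cons_val_fin_one]

/- ## the four statement matrices -/

def myA1 (r : ℕ) : Matrix (Fin (2*r+2)) (Fin (2*r)) ℂ :=
  place 0 0 (MatF r) + place r (r - 1) (MatF (r + 1))
    + place (2*r+1) (2*r-1) !![(1:ℂ)]

def myA2 (r : ℕ) (lam γ β : ℂ) : Matrix (Fin (2*r+2)) (Fin (2*r)) ℂ :=
  place 0 0 (MatK r) + place r (r - 1) (MatK (r + 1))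
    + place (2*r+1) (2*r-1) !![lam] + β • Estd 1 (2*r) + γ • Estd (r+1) (2*r)

def myB1 (r : ℕ) : Matrix (Fin (2*r+2)) (Fin (2*r)) ℂ :=
  place 0 0 (MatF (r+1)) + place (r+1) r (MatF (r+1))

def myB2 (r : ℕ) : Matrix (Fin (2*r+2)) (Fin (2*r)) ℂ :=
  place 0 0 (MatK (r+1)) + place (r+1) r (MatK (r+1))

/- ## row lemmas for A1, A2; column lemmas for B1, B2 -/

section Rows
variable {r : ℕ} (lam γ β : ℂ)

lemma A1_row1 (i : Fin (2*r+2)) (hi : (i:ℕ)+1 < r) (l : Fin (2*r)) :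
    myA1 r i l = if (l:ℕ) = (i:ℕ) then 1 else 0 := by
  have hl := l.isLt; have hii := i.isLt
  simp only [myA1, Matrix.add_apply, placeF_apply, placeOne_apply]
  split_ifs <;> first | (exfalso; omega) | norm_num

lemma A1_row0 (i : Fin (2*r+2)) (hi : (i:ℕ)+1 = r) (l : Fin (2*r)) :
    myA1 r i l = 0 := by
  have hl := l.isLt; have hii := i.isLt
  simp only [myA1, Matrix.add_apply, placeF_apply, placeOne_apply]
  split_ifs <;> first | (exfalso; omega) | norm_num

lemma A1_row2 (i : Fin (2*r+2)) (h1 : r ≤ (i:ℕ)) (h2 : (i:ℕ) < 2*r) (l : Fin (2*r)) :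
    myA1 r i l = if (l:ℕ) = (i:ℕ)-1 then 1 else 0 := by
  have hl := l.isLt; have hii := i.isLt
  simp only [myA1, Matrix.add_apply, placeF_apply, placeOne_apply]
  split_ifs <;> first | (exfalso; omega) | norm_num

lemma A1_row3 (i : Fin (2*r+2)) (hi : (i:ℕ) = 2*r) (l : Fin (2*r)) :
    myA1 r i l = 0 := by
  have hl := l.isLt; have hii := i.isLt
  simp only [myA1, Matrix.add_apply, placeF_apply, placeOne_apply]
  split_ifs <;> first | (exfalso; omega) | norm_num

lemma A1_row4 (hr : 1 ≤ r) (i : Fin (2*r+2)) (hi : (i:ℕ) = 2*r+1) (l : Fin (2*r)) :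
    myA1 r i l = if (l:ℕ) = 2*r-1 then 1 else 0 := by
  have hl := l.isLt; have hii := i.isLt
  simp only [myA1, Matrix.add_apply, placeF_apply, placeOne_apply]
  split_ifs <;> first | (exfalso; omega) | norm_num

lemma A2_rowa (hr : 1 ≤ r) (i : Fin (2*r+2)) (hi : (i:ℕ) = 0) (l : Fin (2*r)) :
    myA2 r lam γ β i l = if (l:ℕ) = 2*r-1 then β else 0 := by
  have hl := l.isLt; have hii := i.isLt
  simp only [myA2, Matrix.add_apply, Matrix.smul_apply, placeK_apply, placeOne_apply,
    Estd, smul_eq_mul]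
  split_ifs <;> first | (exfalso; omega) | ring1

lemma A2_rowb (i : Fin (2*r+2)) (h1 : 1 ≤ (i:ℕ)) (h2 : (i:ℕ) < r) (l : Fin (2*r)) :
    myA2 r lam γ β i l = if (l:ℕ) = (i:ℕ)-1 then 1 else 0 := by
  have hl := l.isLt; have hii := i.isLt
  simp only [myA2, Matrix.add_apply, Matrix.smul_apply, placeK_apply, placeOne_apply,
    Estd, smul_eq_mul]
  split_ifs <;> first | (exfalso; omega) | ring1

lemma A2_rowc (hr : 1 ≤ r) (i : Fin (2*r+2)) (hi : (i:ℕ) = r) (l : Fin (2*r)) :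
    myA2 r lam γ β i l = if (l:ℕ) = 2*r-1 then γ else 0 := by
  have hl := l.isLt; have hii := i.isLt
  simp only [myA2, Matrix.add_apply, Matrix.smul_apply, placeK_apply, placeOne_apply,
    Estd, smul_eq_mul]
  split_ifs <;> first | (exfalso; omega) | ring1

lemma A2_rowd (i : Fin (2*r+2)) (h1 : r+1 ≤ (i:ℕ)) (h2 : (i:ℕ) ≤ 2*r) (l : Fin (2*r)) :
    myA2 r lam γ β i l = if (l:ℕ) = (i:ℕ)-2 then 1 else 0 := by
  have hl := l.isLt; have hii := i.isLt
  simp only [myA2, Matrix.add_apply, Matrix.smul_apply, placeK_apply, placeOne_apply,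
    Estd, smul_eq_mul]
  split_ifs <;> first | (exfalso; omega) | ring1

lemma A2_rowe (hr : 1 ≤ r) (i : Fin (2*r+2)) (hi : (i:ℕ) = 2*r+1) (l : Fin (2*r)) :
    myA2 r lam γ β i l = if (l:ℕ) = 2*r-1 then lam else 0 := by
  have hl := l.isLt; have hii := i.isLt
  simp only [myA2, Matrix.add_apply, Matrix.smul_apply, placeK_apply, placeOne_apply,
    Estd, smul_eq_mul]
  split_ifs <;> first | (exfalso; omega) | ring1

lemma B1_col1 (j : Fin (2*r)) (hj : (j:ℕ) < r) (k : Fin (2*r+2)) :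
    myB1 r k j = if (k:ℕ) = (j:ℕ) then 1 else 0 := by
  have hk := k.isLt; have hjj := j.isLt
  simp only [myB1, Matrix.add_apply, placeF_apply]
  split_ifs <;> first | (exfalso; omega) | norm_num

lemma B1_col2 (j : Fin (2*r)) (hj : r ≤ (j:ℕ)) (k : Fin (2*r+2)) :
    myB1 r k j = if (k:ℕ) = (j:ℕ)+1 then 1 else 0 := by
  have hk := k.isLt; have hjj := j.isLt
  simp only [myB1, Matrix.add_apply, placeF_apply]
  split_ifs <;> first | (exfalso; omega) | norm_num

lemma B2_col1 (j : Fin (2*r)) (hj : (j:ℕ) < r) (k : Fin (2*r+2)) :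
    myB2 r k j = if (k:ℕ) = (j:ℕ)+1 then 1 else 0 := by
  have hk := k.isLt; have hjj := j.isLt
  simp only [myB2, Matrix.add_apply, placeK_apply]
  split_ifs <;> first | (exfalso; omega) | norm_num

lemma B2_col2 (j : Fin (2*r)) (hj : r ≤ (j:ℕ)) (k : Fin (2*r+2)) :
    myB2 r k j = if (k:ℕ) = (j:ℕ)+2 then 1 else 0 := by
  have hk := k.isLt; have hjj := j.isLt
  simp only [myB2, Matrix.add_apply, placeK_apply]
  split_ifs <;> first | (exfalso; omega) | norm_num

end Rows


/- ## primed (nat-indexed) entry lemmas -/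

section Primed
variable (r : ℕ) (lam γ β : ℂ)

lemma myG_topC (i : Fin (2*r+2)) (a : ℕ) (ha : a < 2*r+2) (hk : a ≤ r)
    (hi : (i:ℕ) = 2*r+1) : myG r lam γ β i ⟨a, ha⟩ = lam ^ a :=
  myG_top lam γ β i ⟨a, ha⟩ hk hi

lemma myG_betaC (i : Fin (2*r+2)) (a : ℕ) (ha : a < 2*r+2) (hk : a ≤ r)
    (hi : (i:ℕ) < r) :
    myG r lam γ β i ⟨a, ha⟩ = if (i:ℕ) < a then β * lam^(a-1-(i:ℕ)) else 0 :=
  myG_beta lam γ β i ⟨a, ha⟩ hk hi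

lemma myG_gammaC (i : Fin (2*r+2)) (a : ℕ) (ha : a < 2*r+2) (hk : a ≤ r)
    (h1 : r ≤ (i:ℕ)) (h2 : (i:ℕ) < 2*r) :
    myG r lam γ β i ⟨a, ha⟩ = if (i:ℕ)-r < a then γ * lam^(a-1-((i:ℕ)-r)) else 0 :=
  myG_gamma lam γ β i ⟨a, ha⟩ hk h1 h2

lemma myG_midC (i : Fin (2*r+2)) (a : ℕ) (ha : a < 2*r+2) (hk : a ≤ r)
    (hi : (i:ℕ) = 2*r) : myG r lam γ β i ⟨a, ha⟩ = 0 :=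
  myG_mid lam γ β i ⟨a, ha⟩ hk hi

lemma myG_rightC (i : Fin (2*r+2)) (a : ℕ) (ha : a < 2*r+2) (hk : r < a) :
    myG r lam γ β i ⟨a, ha⟩ = if (i:ℕ)+1 = a then 1 else 0 :=
  myG_right lam γ β i ⟨a, ha⟩ hk

lemma myS_topR (a : ℕ) (ha : a < 2*r) (j : Fin (2*r)) (hj : (j:ℕ) < r) (hi : a = 2*r-1) :
    myS r lam γ β ⟨a, ha⟩ j = lam^(j:ℕ) :=
  myS_top lam γ β ⟨a, ha⟩ j hj hi

lemma myS_betaR (a : ℕ) (ha : a < 2*r) (j : Fin (2*r)) (hj : (j:ℕ) < r) (hi : a+1 < r) :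
    myS r lam γ β ⟨a, ha⟩ j = if a < (j:ℕ) then β * lam^((j:ℕ)-1-a) else 0 :=
  myS_beta lam γ β ⟨a, ha⟩ j hj hi

lemma myS_gammaR (a : ℕ) (ha : a < 2*r) (j : Fin (2*r)) (hj : (j:ℕ) < r)
    (h1 : r ≤ a+1) (h2 : a < 2*r-1) :
    myS r lam γ β ⟨a, ha⟩ j = if a+1-r < (j:ℕ) then γ * lam^((j:ℕ)-1-(a+1-r)) else 0 :=
  myS_gamma lam γ β ⟨a, ha⟩ j hj h1 h2

lemma myS_rightR (a : ℕ) (ha : a < 2*r) (j : Fin (2*r)) (hj : r ≤ (j:ℕ)) :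
    myS r lam γ β ⟨a, ha⟩ j = if a+1 = (j:ℕ) then 1 else 0 :=
  myS_right lam γ β ⟨a, ha⟩ j hj

lemma myS_topC (i : Fin (2*r)) (a : ℕ) (ha : a < 2*r) (hj : a < r) (hi : (i:ℕ) = 2*r-1) :
    myS r lam γ β i ⟨a, ha⟩ = lam ^ a :=
  myS_top lam γ β i ⟨a, ha⟩ hj hi

lemma myS_betaC (i : Fin (2*r)) (a : ℕ) (ha : a < 2*r) (hj : a < r) (hi : (i:ℕ)+1 < r) :
    myS r lam γ β i ⟨a, ha⟩ = if (i:ℕ) < a then β * lam^(a-1-(i:ℕ)) else 0 :=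
  myS_beta lam γ β i ⟨a, ha⟩ hj hi

lemma myS_gammaC (i : Fin (2*r)) (a : ℕ) (ha : a < 2*r) (hj : a < r)
    (h1 : r ≤ (i:ℕ)+1) (h2 : (i:ℕ) < 2*r-1) :
    myS r lam γ β i ⟨a, ha⟩ = if (i:ℕ)+1-r < a then γ * lam^(a-1-((i:ℕ)+1-r)) else 0 :=
  myS_gamma lam γ β i ⟨a, ha⟩ hj h1 h2

lemma myS_rightC (i : Fin (2*r)) (a : ℕ) (ha : a < 2*r) (hj : r ≤ a) :
    myS r lam γ β i ⟨a, ha⟩ = if (i:ℕ)+1 = a then 1 else 0 :=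
  myS_right lam γ β i ⟨a, ha⟩ hj

end Primed

lemma one_apply_nat {n : ℕ} (i j : Fin n) :
    (1 : Matrix (Fin n) (Fin n) ℂ) i j = if (i:ℕ) = (j:ℕ) then 1 else 0 := by
  simp [Matrix.one_apply, Fin.ext_iff]

/- ## G * R = 1 -/

lemma prod_GR (r : ℕ) (lam γ β : ℂ) (hr : 1 ≤ r) (hβ : β ≠ 0) :
    myG r lam γ β * myR r lam γ β = 1 := by
  funext i j
  have hi := i.isLt; have hj := j.isLt
  rw [Matrix.mul_apply, one_apply_nat]
  rcases lt_or_ge (j:ℕ) r with hj1 | hj1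
  · simp only [myR_col1 lam γ β j hj1, mul_add]
    rw [Finset.sum_add_distrib, Finset.sum_add_distrib,
        sum_dr ((j:ℕ)+1) (by omega), sum_dr (j:ℕ) (by omega), sum_dr (r+1+(j:ℕ)) (by omega)]
    rw [myG_rightC r lam γ β i (r+1+(j:ℕ)) (by omega) (by omega)]
    by_cases c5 : (i:ℕ) = 2*r+1
    · rw [myG_topC r lam γ β i ((j:ℕ)+1) (by omega) (by omega) c5,
          myG_topC r lam γ β i (j:ℕ) (by omega) (by omega) c5,
          if_neg (by omega : ¬((i:ℕ)+1 = r+1+(j:ℕ))), if_neg (by omega : ¬((i:ℕ) = (j:ℕ))),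
          pow_succ]
      ring1
    · by_cases c1 : (i:ℕ) < r
      · rw [myG_betaC r lam γ β i ((j:ℕ)+1) (by omega) (by omega) c1,
            myG_betaC r lam γ β i (j:ℕ) (by omega) (by omega) c1,
            if_neg (by omega : ¬((i:ℕ)+1 = r+1+(j:ℕ)))]
        rcases lt_trichotomy (i:ℕ) (j:ℕ) with h | h | h
        · rw [if_pos (by omega : (i:ℕ) < (j:ℕ)+1), if_pos h,
              if_neg (by omega : ¬((i:ℕ) = (j:ℕ))),
              show (j:ℕ)+1-1-(i:ℕ) = ((j:ℕ)-1-(i:ℕ))+1 from by omega, pow_succ]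
          ring1
        · rw [if_pos (by omega : (i:ℕ) < (j:ℕ)+1), if_neg (by omega : ¬((i:ℕ) < (j:ℕ))),
              if_pos h, show (j:ℕ)+1-1-(i:ℕ) = 0 from by omega, pow_zero]
          field_simp
          ring1
        · rw [if_neg (by omega : ¬((i:ℕ) < (j:ℕ)+1)), if_neg (by omega : ¬((i:ℕ) < (j:ℕ))),
              if_neg (by omega : ¬((i:ℕ) = (j:ℕ)))]
          ring1
      · by_cases c3 : (i:ℕ) < 2*r
        · have hir : r ≤ (i:ℕ) := by omega
          rw [myG_gammaC r lam γ β i ((j:ℕ)+1) (by omega) (by omega) hir c3,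
              myG_gammaC r lam γ β i (j:ℕ) (by omega) (by omega) hir c3,
              if_neg (by omega : ¬((i:ℕ) = (j:ℕ)))]
          rcases lt_trichotomy ((i:ℕ)-r) (j:ℕ) with h | h | h
          · rw [if_pos (by omega : (i:ℕ)-r < (j:ℕ)+1), if_pos h,
                if_neg (by omega : ¬((i:ℕ)+1 = r+1+(j:ℕ))),
                show (j:ℕ)+1-1-((i:ℕ)-r) = ((j:ℕ)-1-((i:ℕ)-r))+1 from by omega, pow_succ]
            ring1
          · rw [if_pos (by omega : (i:ℕ)-r < (j:ℕ)+1), if_neg (by omega : ¬((i:ℕ)-r < (j:ℕ))),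
                if_pos (by omega : (i:ℕ)+1 = r+1+(j:ℕ)),
                show (j:ℕ)+1-1-((i:ℕ)-r) = 0 from by omega, pow_zero]
            ring1
          · rw [if_neg (by omega : ¬((i:ℕ)-r < (j:ℕ)+1)), if_neg (by omega : ¬((i:ℕ)-r < (j:ℕ))),
                if_neg (by omega : ¬((i:ℕ)+1 = r+1+(j:ℕ)))]
            ring1
        · have c4 : (i:ℕ) = 2*r := by omega
          rw [myG_midC r lam γ β i ((j:ℕ)+1) (by omega) (by omega) c4,
              myG_midC r lam γ β i (j:ℕ) (by omega) (by omega) c4,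
              if_neg (by omega : ¬((i:ℕ)+1 = r+1+(j:ℕ))), if_neg (by omega : ¬((i:ℕ) = (j:ℕ)))]
          ring1
  · by_cases hj2 : (j:ℕ) ≤ 2*r
    · simp only [myR_col2 lam γ β j hj1 hj2]
      rw [sum_dr ((j:ℕ)+1) (by omega),
          myG_rightC r lam γ β i ((j:ℕ)+1) (by omega) (by omega)]
      by_cases cij : (i:ℕ) = (j:ℕ)
      · rw [if_pos (by omega : (i:ℕ)+1 = (j:ℕ)+1), if_pos cij]; ring1
      · rw [if_neg (by omega : ¬((i:ℕ)+1 = (j:ℕ)+1)), if_neg cij]; ring1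
    · simp only [myR_col3 lam γ β j (by omega)]
      rw [sum_dr 0 (by omega)]
      by_cases c5 : (i:ℕ) = 2*r+1
      · rw [myG_topC r lam γ β i 0 (by omega) (by omega) c5,
            if_pos (by omega : (i:ℕ) = (j:ℕ)), pow_zero]
        ring1
      · rw [if_neg (by omega : ¬((i:ℕ) = (j:ℕ)))]
        by_cases c1 : (i:ℕ) < r
        · rw [myG_betaC r lam γ β i 0 (by omega) (by omega) c1,
              if_neg (by omega : ¬((i:ℕ) < 0))]
          ring1
        · by_cases c3 : (i:ℕ) < 2*r
          · rw [myG_gammaC r lam γ β i 0 (by omega) (by omega) (by omega) c3,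
                if_neg (by omega : ¬((i:ℕ)-r < 0))]
            ring1
          · rw [myG_midC r lam γ β i 0 (by omega) (by omega) (by omega : (i:ℕ) = 2*r)]
            ring1

/- ## S * T = 1 -/

lemma prod_ST (r : ℕ) (lam γ β : ℂ) (hr : 1 ≤ r) (hβ : β ≠ 0) :
    myS r lam γ β * myT r lam γ β = 1 := by
  funext i j
  have hi := i.isLt; have hj := j.isLt
  rw [Matrix.mul_apply, one_apply_nat]
  by_cases hj1 : (j:ℕ)+1 < r
  · simp only [myT_col1 lam γ β j hj1, mul_add]
    rw [Finset.sum_add_distrib, Finset.sum_add_distrib,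
        sum_dr ((j:ℕ)+1) (by omega), sum_dr (j:ℕ) (by omega), sum_dr (r+(j:ℕ)) (by omega)]
    rw [myS_rightC r lam γ β i (r+(j:ℕ)) (by omega) (by omega)]
    by_cases c5 : (i:ℕ) = 2*r-1
    · rw [myS_topC r lam γ β i ((j:ℕ)+1) (by omega) (by omega) c5,
          myS_topC r lam γ β i (j:ℕ) (by omega) (by omega) c5,
          if_neg (by omega : ¬((i:ℕ)+1 = r+(j:ℕ))), if_neg (by omega : ¬((i:ℕ) = (j:ℕ))),
          pow_succ]
      ring1
    · by_cases c1 : (i:ℕ)+1 < r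
      · rw [myS_betaC r lam γ β i ((j:ℕ)+1) (by omega) (by omega) c1,
            myS_betaC r lam γ β i (j:ℕ) (by omega) (by omega) c1,
            if_neg (by omega : ¬((i:ℕ)+1 = r+(j:ℕ)))]
        rcases lt_trichotomy (i:ℕ) (j:ℕ) with h | h | h
        · rw [if_pos (by omega : (i:ℕ) < (j:ℕ)+1), if_pos h,
              if_neg (by omega : ¬((i:ℕ) = (j:ℕ))),
              show (j:ℕ)+1-1-(i:ℕ) = ((j:ℕ)-1-(i:ℕ))+1 from by omega, pow_succ]
          ring1
        · rw [if_pos (by omega : (i:ℕ) < (j:ℕ)+1), if_neg (by omega : ¬((i:ℕ) < (j:ℕ))),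
              if_pos h, show (j:ℕ)+1-1-(i:ℕ) = 0 from by omega, pow_zero]
          field_simp
          ring1
        · rw [if_neg (by omega : ¬((i:ℕ) < (j:ℕ)+1)), if_neg (by omega : ¬((i:ℕ) < (j:ℕ))),
              if_neg (by omega : ¬((i:ℕ) = (j:ℕ)))]
          ring1
      · have h1 : r ≤ (i:ℕ)+1 := by omega
        have h2 : (i:ℕ) < 2*r-1 := by omega
        rw [myS_gammaC r lam γ β i ((j:ℕ)+1) (by omega) (by omega) h1 h2,
            myS_gammaC r lam γ β i (j:ℕ) (by omega) (by omega) h1 h2,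
            if_neg (by omega : ¬((i:ℕ) = (j:ℕ)))]
        rcases lt_trichotomy ((i:ℕ)+1-r) (j:ℕ) with h | h | h
        · rw [if_pos (by omega : (i:ℕ)+1-r < (j:ℕ)+1), if_pos h,
              if_neg (by omega : ¬((i:ℕ)+1 = r+(j:ℕ))),
              show (j:ℕ)+1-1-((i:ℕ)+1-r) = ((j:ℕ)-1-((i:ℕ)+1-r))+1 from by omega, pow_succ]
          ring1
        · rw [if_pos (by omega : (i:ℕ)+1-r < (j:ℕ)+1), if_neg (by omega : ¬((i:ℕ)+1-r < (j:ℕ))),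
              if_pos (by omega : (i:ℕ)+1 = r+(j:ℕ)),
              show (j:ℕ)+1-1-((i:ℕ)+1-r) = 0 from by omega, pow_zero]
          ring1
        · rw [if_neg (by omega : ¬((i:ℕ)+1-r < (j:ℕ)+1)), if_neg (by omega : ¬((i:ℕ)+1-r < (j:ℕ))),
              if_neg (by omega : ¬((i:ℕ)+1 = r+(j:ℕ)))]
          ring1
  · by_cases hj2 : (j:ℕ) < 2*r-1
    · simp only [myT_col2 lam γ β j (by omega) hj2]
      rw [sum_dr ((j:ℕ)+1) (by omega),
          myS_rightC r lam γ β i ((j:ℕ)+1) (by omega) (by omega)]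
      by_cases cij : (i:ℕ) = (j:ℕ)
      · rw [if_pos (by omega : (i:ℕ)+1 = (j:ℕ)+1), if_pos cij]; ring1
      · rw [if_neg (by omega : ¬((i:ℕ)+1 = (j:ℕ)+1)), if_neg cij]; ring1
    · simp only [myT_col3 lam γ β j (by omega) hr]
      rw [sum_dr 0 (by omega)]
      by_cases c5 : (i:ℕ) = 2*r-1
      · rw [myS_topC r lam γ β i 0 (by omega) (by omega) c5,
            if_pos (by omega : (i:ℕ) = (j:ℕ)), pow_zero]
        ring1
      · rw [if_neg (by omega : ¬((i:ℕ) = (j:ℕ)))]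
        by_cases c1 : (i:ℕ)+1 < r
        · rw [myS_betaC r lam γ β i 0 (by omega) (by omega) c1,
              if_neg (by omega : ¬((i:ℕ) < 0))]
          ring1
        · rw [myS_gammaC r lam γ β i 0 (by omega) (by omega) (by omega) (by omega),
              if_neg (by omega : ¬((i:ℕ)+1-r < 0))]
          ring1


/- ## G * B1 = A1 * S -/

lemma prod_GB1 (r : ℕ) (lam γ β : ℂ) (hr : 1 ≤ r) :
    myG r lam γ β * myB1 r = myA1 r * myS r lam γ β := by
  funext i j
  have hi := i.isLt; have hj := j.isLt
  rw [Matrix.mul_apply, Matrix.mul_apply]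
  rcases lt_or_ge (j:ℕ) r with hjr | hjr
  · simp only [B1_col1 j hjr]
    rw [sum_dr (j:ℕ) (by omega)]
    by_cases c1 : (i:ℕ)+1 < r
    · simp only [A1_row1 i c1]
      rw [sum_dl (i:ℕ) (by omega),
          myG_betaC r lam γ β i (j:ℕ) (by omega) (by omega) (by omega),
          myS_betaR r lam γ β (i:ℕ) (by omega) j hjr c1]
      ring1
    · by_cases c2 : (i:ℕ)+1 = r
      · simp only [A1_row0 i c2]
        rw [myG_betaC r lam γ β i (j:ℕ) (by omega) (by omega) (by omega),
            if_neg (by omega : ¬((i:ℕ) < (j:ℕ)))]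
        simp
      · by_cases c3 : (i:ℕ) < 2*r
        · have hir : r ≤ (i:ℕ) := by omega
          simp only [A1_row2 i hir c3]
          rw [sum_dl ((i:ℕ)-1) (by omega),
              myG_gammaC r lam γ β i (j:ℕ) (by omega) (by omega) hir c3,
              myS_gammaR r lam γ β ((i:ℕ)-1) (by omega) j hjr (by omega) (by omega),
              show (i:ℕ)-1+1-r = (i:ℕ)-r from by omega]
          ring1
        · by_cases c4 : (i:ℕ) = 2*r
          · simp only [A1_row3 i c4]
            rw [myG_midC r lam γ β i (j:ℕ) (by omega) (by omega) c4]
            simp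
          · have c5 : (i:ℕ) = 2*r+1 := by omega
            simp only [A1_row4 hr i c5]
            rw [sum_dl (2*r-1) (by omega),
                myG_topC r lam γ β i (j:ℕ) (by omega) (by omega) c5,
                myS_topR r lam γ β (2*r-1) (by omega) j hjr rfl]
            ring1
  · simp only [B1_col2 j hjr]
    rw [sum_dr ((j:ℕ)+1) (by omega), myG_rightC r lam γ β i ((j:ℕ)+1) (by omega) (by omega)]
    by_cases c1 : (i:ℕ)+1 < r
    · simp only [A1_row1 i c1]
      rw [sum_dl (i:ℕ) (by omega), myS_rightR r lam γ β (i:ℕ) (by omega) j hjr,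
          if_neg (by omega : ¬((i:ℕ)+1 = (j:ℕ)+1)), if_neg (by omega : ¬((i:ℕ)+1 = (j:ℕ)))]
      ring1
    · by_cases c2 : (i:ℕ)+1 = r
      · simp only [A1_row0 i c2]
        rw [if_neg (by omega : ¬((i:ℕ)+1 = (j:ℕ)+1))]
        simp
      · by_cases c3 : (i:ℕ) < 2*r
        · have hir : r ≤ (i:ℕ) := by omega
          simp only [A1_row2 i hir c3]
          rw [sum_dl ((i:ℕ)-1) (by omega), myS_rightR r lam γ β ((i:ℕ)-1) (by omega) j hjr]
          by_cases cij : (i:ℕ) = (j:ℕ)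
          · rw [if_pos (by omega : (i:ℕ)+1 = (j:ℕ)+1), if_pos (by omega : (i:ℕ)-1+1 = (j:ℕ))]
            skip
          · rw [if_neg (by omega : ¬((i:ℕ)+1 = (j:ℕ)+1)), if_neg (by omega : ¬((i:ℕ)-1+1 = (j:ℕ)))]
            ring1
        · by_cases c4 : (i:ℕ) = 2*r
          · simp only [A1_row3 i c4]
            rw [if_neg (by omega : ¬((i:ℕ)+1 = (j:ℕ)+1))]
            simp
          · have c5 : (i:ℕ) = 2*r+1 := by omega
            simp only [A1_row4 hr i c5]
            rw [sum_dl (2*r-1) (by omega), myS_rightR r lam γ β (2*r-1) (by omega) j hjr,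
                if_neg (by omega : ¬((i:ℕ)+1 = (j:ℕ)+1)), if_neg (by omega : ¬(2*r-1+1 = (j:ℕ)))]
            ring1

/- ## G * B2 = A2 * S -/

lemma prod_GB2 (r : ℕ) (lam γ β : ℂ) (hr : 1 ≤ r) :
    myG r lam γ β * myB2 r = myA2 r lam γ β * myS r lam γ β := by
  funext i j
  have hi := i.isLt; have hj := j.isLt
  rw [Matrix.mul_apply, Matrix.mul_apply]
  rcases lt_or_ge (j:ℕ) r with hjr | hjr
  · simp only [B2_col1 j hjr]
    rw [sum_dr ((j:ℕ)+1) (by omega)]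
    by_cases ca : (i:ℕ) = 0
    · simp only [A2_rowa lam γ β hr i ca]
      rw [sum_dl (2*r-1) (by omega), myS_topR r lam γ β (2*r-1) (by omega) j hjr rfl,
          myG_betaC r lam γ β i ((j:ℕ)+1) (by omega) (by omega) (by omega),
          if_pos (by omega : (i:ℕ) < (j:ℕ)+1),
          show (j:ℕ)+1-1-(i:ℕ) = (j:ℕ) from by omega]
      ring1
    · by_cases cb : (i:ℕ) < r
      · simp only [A2_rowb lam γ β i (by omega) cb]
        rw [sum_dl ((i:ℕ)-1) (by omega),
            myS_betaR r lam γ β ((i:ℕ)-1) (by omega) j hjr (by omega),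
            myG_betaC r lam γ β i ((j:ℕ)+1) (by omega) (by omega) cb]
        by_cases cij : (i:ℕ) ≤ (j:ℕ)
        · rw [if_pos (by omega : (i:ℕ) < (j:ℕ)+1), if_pos (by omega : (i:ℕ)-1 < (j:ℕ)),
              show (j:ℕ)+1-1-(i:ℕ) = (j:ℕ)-(i:ℕ) from by omega,
              show (j:ℕ)-1-((i:ℕ)-1) = (j:ℕ)-(i:ℕ) from by omega]
          ring1
        · rw [if_neg (by omega : ¬((i:ℕ) < (j:ℕ)+1)), if_neg (by omega : ¬((i:ℕ)-1 < (j:ℕ)))]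
          ring1
      · by_cases cc : (i:ℕ) = r
        · simp only [A2_rowc lam γ β hr i cc]
          rw [sum_dl (2*r-1) (by omega), myS_topR r lam γ β (2*r-1) (by omega) j hjr rfl,
              myG_gammaC r lam γ β i ((j:ℕ)+1) (by omega) (by omega) (by omega) (by omega),
              if_pos (by omega : (i:ℕ)-r < (j:ℕ)+1),
              show (j:ℕ)+1-1-((i:ℕ)-r) = (j:ℕ) from by omega]
          ring1
        · by_cases cd : (i:ℕ) ≤ 2*r
          · simp only [A2_rowd lam γ β i (by omega) cd]
            rw [sum_dl ((i:ℕ)-2) (by omega),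
                myS_gammaR r lam γ β ((i:ℕ)-2) (by omega) j hjr (by omega) (by omega)]
            by_cases ce : (i:ℕ) < 2*r
            · rw [myG_gammaC r lam γ β i ((j:ℕ)+1) (by omega) (by omega) (by omega) ce]
              by_cases cij : (i:ℕ)-r ≤ (j:ℕ)
              · rw [if_pos (by omega : (i:ℕ)-r < (j:ℕ)+1), if_pos (by omega : (i:ℕ)-2+1-r < (j:ℕ)),
                    show (j:ℕ)+1-1-((i:ℕ)-r) = (j:ℕ)+r-(i:ℕ) from by omega,
                    show (j:ℕ)-1-((i:ℕ)-2+1-r) = (j:ℕ)+r-(i:ℕ) from by omega]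
                ring1
              · rw [if_neg (by omega : ¬((i:ℕ)-r < (j:ℕ)+1)), if_neg (by omega : ¬((i:ℕ)-2+1-r < (j:ℕ)))]
                ring1
            · rw [myG_midC r lam γ β i ((j:ℕ)+1) (by omega) (by omega) (by omega),
                  if_neg (by omega : ¬((i:ℕ)-2+1-r < (j:ℕ)))]
              ring1
          · have ce : (i:ℕ) = 2*r+1 := by omega
            simp only [A2_rowe lam γ β hr i ce]
            rw [sum_dl (2*r-1) (by omega), myS_topR r lam γ β (2*r-1) (by omega) j hjr rfl,
                myG_topC r lam γ β i ((j:ℕ)+1) (by omega) (by omega) ce, pow_succ]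
            ring1
  · simp only [B2_col2 j hjr]
    rw [sum_dr ((j:ℕ)+2) (by omega), myG_rightC r lam γ β i ((j:ℕ)+2) (by omega) (by omega)]
    by_cases ca : (i:ℕ) = 0
    · simp only [A2_rowa lam γ β hr i ca]
      rw [sum_dl (2*r-1) (by omega), myS_rightR r lam γ β (2*r-1) (by omega) j hjr,
          if_neg (by omega : ¬((i:ℕ)+1 = (j:ℕ)+2)), if_neg (by omega : ¬(2*r-1+1 = (j:ℕ)))]
      ring1
    · by_cases cb : (i:ℕ) < r
      · simp only [A2_rowb lam γ β i (by omega) cb]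
        rw [sum_dl ((i:ℕ)-1) (by omega), myS_rightR r lam γ β ((i:ℕ)-1) (by omega) j hjr,
            if_neg (by omega : ¬((i:ℕ)+1 = (j:ℕ)+2)), if_neg (by omega : ¬((i:ℕ)-1+1 = (j:ℕ)))]
        ring1
      · by_cases cc : (i:ℕ) = r
        · simp only [A2_rowc lam γ β hr i cc]
          rw [sum_dl (2*r-1) (by omega), myS_rightR r lam γ β (2*r-1) (by omega) j hjr,
              if_neg (by omega : ¬((i:ℕ)+1 = (j:ℕ)+2)), if_neg (by omega : ¬(2*r-1+1 = (j:ℕ)))]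
          ring1
        · by_cases cd : (i:ℕ) ≤ 2*r
          · simp only [A2_rowd lam γ β i (by omega) cd]
            rw [sum_dl ((i:ℕ)-2) (by omega), myS_rightR r lam γ β ((i:ℕ)-2) (by omega) j hjr]
            by_cases cij : (i:ℕ) = (j:ℕ)+1
            · rw [if_pos (by omega : (i:ℕ)+1 = (j:ℕ)+2), if_pos (by omega : (i:ℕ)-2+1 = (j:ℕ))]
              skip
            · rw [if_neg (by omega : ¬((i:ℕ)+1 = (j:ℕ)+2)), if_neg (by omega : ¬((i:ℕ)-2+1 = (j:ℕ)))]
              ring1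
          · have ce : (i:ℕ) = 2*r+1 := by omega
            simp only [A2_rowe lam γ β hr i ce]
            rw [sum_dl (2*r-1) (by omega), myS_rightR r lam γ β (2*r-1) (by omega) j hjr,
                if_neg (by omega : ¬((i:ℕ)+1 = (j:ℕ)+2)), if_neg (by omega : ¬(2*r-1+1 = (j:ℕ)))]
            ring1

theorem bif_tri_r_rp1_lambda_beta_ne (r : ℕ) (hr : 1 ≤ r) (lam γ : ℂ) (β : ℂ) (hβ : β ≠ 0) :
    PairEquiv
      (place 0 0 (MatF r) + place r (r - 1) (MatF (r + 1))
          + place (2 * r + 1) (2 * r - 1) !![(1 : ℂ)] :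
        Matrix (Fin (2 * r + 2)) (Fin (2 * r)) ℂ)
      (place 0 0 (MatK r) + place r (r - 1) (MatK (r + 1))
          + place (2 * r + 1) (2 * r - 1) !![lam]
          + β • Estd 1 (2 * r) + γ • Estd (r + 1) (2 * r))
      (place 0 0 (MatF (r + 1)) + place (r + 1) r (MatF (r + 1)))
      (place 0 0 (MatK (r + 1)) + place (r + 1) r (MatK (r + 1))) := by
  have hGR := prod_GR r lam γ β hr hβ
  have hRG : myR r lam γ β * myG r lam γ β = 1 := mul_eq_one_comm.mp hGR
  have hST := prod_ST r lam γ β hr hβ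
  have hTS : myT r lam γ β * myS r lam γ β = 1 := mul_eq_one_comm.mp hST
  have h1 := prod_GB1 r lam γ β hr
  have h2 := prod_GB2 r lam γ β hr
  refine ⟨myR r lam γ β, myS r lam γ β,
    ⟨⟨myR r lam γ β, myG r lam γ β, hRG, hGR⟩, rfl⟩,
    ⟨⟨myS r lam γ β, myT r lam γ β, hST, hTS⟩, rfl⟩, ?_, ?_⟩
  · show myB1 r = myR r lam γ β * myA1 r * myS r lam γ β
    rw [Matrix.mul_assoc, ← h1, ← Matrix.mul_assoc, hRG, Matrix.one_mul]
  · show myB2 r = myR r lam γ β * myA2 r lam γ β * myS r lam γ β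
    rw [Matrix.mul_assoc, ← h2, ← Matrix.mul_assoc, hRG, Matrix.one_mul]


end
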